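/- arXiv:1707.04551 — 4 statements merged into one kernel-verified Lean document; each statement's English description precedes it below -/
import Mathlib

section
/- Let 𝒜 be a finite list of elements in Γ = ℤ^ℓ, let ρ_𝒜 be the lcm of all the last invariant factors d_{𝒮,r_𝒮} over sublists 𝒮 ⊂ 𝒜, and let k ≥ 1 divide ρ_𝒜. Then for any positive integer q with gcd(q, ρ_𝒜) = k, the cardinality #M(𝒜; ℤ^ℓ, ℤ/qℤ) equals χ_𝒜^{ℤ/kℤ}(q) = Σ_{𝒮⊂𝒜} (−1)^{#𝒮} m(𝒮; ℤ/kℤ) q^{ℓ − r_𝒮}. In particular, the k-constituent of the characteristic quasi-polynomial equals the (ℤ/kℤ)-characteristic polynomial χ_𝒜^{ℤ/kℤ}(t). -/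
/-- The rank of the subgroup generated by a subset `X` of an abelian group `Γ`. -/
noncomputable def rk (Γ : Type*) [AddCommGroup Γ] (X : Set Γ) : ℕ :=
  Module.finrank ℤ (AddSubgroup.closure X)

/-- The `G`-multiplicity `m(X; G) = #Hom((Γ/⟨X⟩)_tor, G)`. -/
noncomputable def mult (Γ : Type*) [AddCommGroup Γ] (G : Type*) [AddCommGroup G]
    (X : Set Γ) : ℕ :=
  Nat.card ((AddCommGroup.torsion (Γ ⧸ AddSubgroup.closure X)) →+ G)

/-- `ρ_𝒜`: the lcm over all sublists `𝒮 ⊆ 𝒜` of the last invariant factor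
`d_{𝒮, r_𝒮}`, i.e. the exponent of the torsion part of `Γ/⟨𝒮⟩`. -/
noncomputable def rho {ι : Type*} (Γ : Type*) [AddCommGroup Γ]
    (A : Finset ι) (a : ι → Γ) : ℕ :=
  A.powerset.lcm fun S =>
    AddMonoid.exponent (AddCommGroup.torsion (Γ ⧸ AddSubgroup.closure (a '' (S : Set ι))))

private lemma ite_inst {c : Prop} (h1 h2 : Decidable c) (x y : ℤ) :
    @ite ℤ c h1 x y = @ite ℤ c h2 x y := by
  cases Subsingleton.elim h1 h2; rfl

lemma incl_excl {Φ : Type*} [Fintype Φ] {ι : Type*} (A : Finset ι) (P : ι → Φ → Prop) :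
    ((Nat.card {φ : Φ // ∀ i ∈ A, ¬ P i φ}) : ℤ) =
      ∑ S ∈ A.powerset, (-1 : ℤ) ^ S.card * Nat.card {φ : Φ // ∀ i ∈ S, P i φ} := by
  classical
  have hcardN : ∀ (p : Φ → Prop) (inst : DecidablePred p), (Nat.card {φ : Φ // p φ} : ℤ)
      = ∑ φ : Φ, @ite ℤ (p φ) (inst φ) (1 : ℤ) 0 := by
    intro p inst
    rw [Nat.card_eq_fintype_card, Fintype.card_subtype]
    push_cast [Finset.card_filter]
    exact Finset.sum_congr rfl fun φ _ => ite_inst _ _ _ _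
  have key : ∀ φ : Φ, (if (∀ i ∈ A, ¬ P i φ) then (1 : ℤ) else 0)
      = ∑ S ∈ A.powerset, (-1 : ℤ) ^ S.card * (if (∀ i ∈ S, P i φ) then (1 : ℤ) else 0) := by
    intro φ
    have h1 : (if (∀ i ∈ A, ¬ P i φ) then (1 : ℤ) else 0)
        = ∏ i ∈ A, ((if P i φ then (-1 : ℤ) else 0) + 1) := by
      rw [← Finset.prod_boole]
      · refine (Finset.prod_congr rfl fun i _ => ?_).symm
        by_cases h : P i φ <;> simp [h]
    rw [h1, Finset.prod_add]
    refine Finset.sum_congr rfl fun S hS => ?_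
    rw [Finset.prod_const_one, mul_one]
    have : ∀ i ∈ S, (if P i φ then (-1 : ℤ) else 0) = (-1) * (if P i φ then (1:ℤ) else 0) := by
      intro i _; by_cases h : P i φ <;> simp [h]
    rw [Finset.prod_congr rfl this, Finset.prod_mul_distrib, Finset.prod_const,
      Finset.prod_boole]
  refine (hcardN _ (fun φ => inferInstance)).trans ?_
  refine (Finset.sum_congr rfl fun φ _ => (ite_inst _ _ _ _).trans (key φ)).trans ?_
  refine (Finset.sum_comm).trans ?_
  refine Finset.sum_congr rfl fun S _ => ?_
  rw [← Finset.mul_sum, hcardN _ (fun φ => inferInstance)]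

lemma card_ann (a b : ℕ) [NeZero b] : Nat.card {x : ZMod b // a • x = 0} = Nat.gcd a b := by
  classical
  have hb : b ≠ 0 := NeZero.ne b
  set g : ZMod b →+ ZMod b := AddMonoidHom.mulLeft (a : ZMod b) with hg
  have hker : ∀ x : ZMod b, x ∈ g.ker ↔ a • x = 0 := by
    intro x; simp [hg, AddMonoidHom.mem_ker, AddMonoidHom.mulLeft, nsmul_eq_mul]
  have e1 : {x : ZMod b // a • x = 0} ≃ g.ker := Equiv.subtypeEquivRight (fun x => (hker x).symm)
  have hcard := AddSubgroup.card_eq_card_quotient_mul_card_addSubgroup g.ker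
  have hrange : g.range = AddSubgroup.zmultiples ((a : ZMod b)) := by
    ext y
    constructor
    · rintro ⟨x, rfl⟩
      obtain ⟨z, rfl⟩ := ZMod.intCast_surjective (n := b) x
      exact ⟨z, by simp [hg, AddMonoidHom.mulLeft, mul_comm, zsmul_eq_mul]⟩
    · rintro ⟨z, rfl⟩
      exact ⟨(z : ZMod b), by simp [hg, AddMonoidHom.mulLeft, mul_comm, zsmul_eq_mul]⟩
  have hq : Nat.card (ZMod b ⧸ g.ker) = b / b.gcd a := by
    rw [Nat.card_congr (QuotientAddGroup.quotientKerEquivRange g).toEquiv, hrange,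
      Nat.card_zmultiples, ZMod.addOrderOf_coe a hb]
  rw [Nat.card_congr e1]
  rw [Nat.card_zmod, hq] at hcard
  have hdvd : b.gcd a ∣ b := Nat.gcd_dvd_left b a
  have hne : 0 < b / b.gcd a :=
    Nat.div_pos (Nat.le_of_dvd (Nat.pos_of_ne_zero hb) hdvd)
      (Nat.gcd_pos_of_pos_left a (Nat.pos_of_ne_zero hb))
  have : b / b.gcd a * b.gcd a = b / b.gcd a * Nat.card g.ker := by
    rw [Nat.div_mul_cancel hdvd, ← hcard]
  have := Nat.eq_of_mul_eq_mul_left hne this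
  rw [← this, Nat.gcd_comm]


lemma card_zmod_hom (a b : ℕ) [NeZero b] : Nat.card (ZMod a →+ ZMod b) = Nat.gcd a b := by
  have e1 : (ZMod a →+ ZMod b) ≃ { f : ℤ →+ ZMod b // f (a : ℤ) = 0 } := (ZMod.lift a).symm
  have e2 : { f : ℤ →+ ZMod b // f (a : ℤ) = 0 } ≃ {x : ZMod b // a • x = 0} := by
    refine ((zmultiplesHom (ZMod b)).subtypeEquiv ?_).symm
    intro x
    simp [zmultiplesHom]
  rw [Nat.card_congr e1, Nat.card_congr e2, card_ann]

lemma zmod_finite_order_eq_zero {c : ℕ} (hc : c = 0) (y : ZMod c) (h : IsOfFinAddOrder y) :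
    y = 0 := by
  subst hc
  obtain ⟨nn, hn, h0⟩ := isOfFinAddOrder_iff_nsmul_eq_zero.mp h
  haveI : NoZeroDivisors (ZMod 0) := inferInstanceAs (NoZeroDivisors ℤ)
  haveI : CharZero (ZMod 0) := inferInstanceAs (CharZero ℤ)
  rw [nsmul_eq_mul] at h0
  rcases mul_eq_zero.mp h0 with h | h
  · exact absurd (Nat.cast_eq_zero.mp h) hn.ne'
  · exact h

lemma zmod_nsmul_self {c : ℕ} (y : ZMod c) : c • y = 0 := by
  rw [nsmul_eq_mul, ZMod.natCast_self, zero_mul]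

lemma card_hom_pi {J : Type*} [Fintype J] [DecidableEq J] (c : J → ℕ) (b : ℕ) [NeZero b] :
    Nat.card ((∀ j, ZMod (c j)) →+ ZMod b) = ∏ j, Nat.gcd (c j) b := by
  have e1 : ((∀ j, ZMod (c j)) →+ ZMod b) ≃ₗ[ℤ] ((∀ j, ZMod (c j)) →ₗ[ℤ] ZMod b) :=
    addMonoidHomLequivInt ℤ
  have e2 := (LinearMap.lsum ℤ (fun j => ZMod (c j)) ℤ (M := ZMod b)).symm
  have e3 : ∀ j, (ZMod (c j) →ₗ[ℤ] ZMod b) ≃ (ZMod (c j) →+ ZMod b) :=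
    fun j => (addMonoidHomLequivInt ℤ (A := ZMod (c j)) (B := ZMod b)).symm.toEquiv
  rw [Nat.card_congr (e1.toEquiv.trans (e2.toEquiv.trans (Equiv.piCongrRight e3))),
    Nat.card_pi]
  exact Finset.prod_congr rfl fun j _ => card_zmod_hom (c j) b

lemma key_count (ℓ q k : ℕ) [NeZero q] [NeZero k] (X : Set (Fin ℓ → ℤ))
    (hgcd : ∀ r : ℕ, r ∣ AddMonoid.exponent
        (AddCommGroup.torsion ((Fin ℓ → ℤ) ⧸ AddSubgroup.closure X)) →
      Nat.gcd r q = Nat.gcd r k) :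
    Nat.card {φ : (Fin ℓ → ℤ) →+ ZMod q // ∀ x ∈ X, φ x = 0}
      = mult (Fin ℓ → ℤ) (ZMod k) X * q ^ (ℓ - rk (Fin ℓ → ℤ) X) := by
  classical
  set N : Submodule ℤ (Fin ℓ → ℤ) := Submodule.span ℤ X with hN
  obtain ⟨n, bM, bN, f, d, hsnf⟩ := N.smithNormalForm (Pi.basisFun ℤ (Fin ℓ))
  -- diagonal entries are nonzero
  have hd : ∀ i, d i ≠ 0 := by
    intro i hi
    have h0 : (bN i : Fin ℓ → ℤ) = 0 := by rw [hsnf i, hi, zero_smul]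
    exact bN.ne_zero i (Subtype.coe_injective (by simpa using h0))
  -- the diagonal as a function on all of Fin ℓ
  set m : Fin ℓ → ℕ := fun j => if h : ∃ i, f i = j then (d h.choose).natAbs else 0 with hm
  have hmf : ∀ i, m (f i) = (d i).natAbs := by
    intro i
    have h : ∃ i', f i' = f i := ⟨i, rfl⟩
    have : h.choose = i := f.injective h.choose_spec
    simp [hm, dif_pos h, this]
  have hm0 : ∀ j, j ∉ Set.range f → m j = 0 := by
    intro j hj
    have : ¬ ∃ i, f i = j := by simpa [Set.mem_range] using hj
    simp [hm, dif_neg this]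
  have hmne : ∀ j, j ∈ Set.range f → m j ≠ 0 := by
    rintro j ⟨i, rfl⟩
    rw [hmf i]
    simpa using hd i
  -- the projection map
  set π : (Fin ℓ → ℤ) →+ (∀ j, ZMod (m j)) :=
    { toFun := fun x j => ((bM.repr x j : ℤ) : ZMod (m j))
      map_zero' := by funext j; simp
      map_add' := by intro x y; funext j; simp } with hπ
  have hrepr : ∀ (z : Fin ℓ → ℤ) (j : Fin ℓ), bM.repr (∑ j', z j' • bM j') j = z j := by
    intro z j
    rw [map_sum]
    rw [Finsupp.finset_sum_apply]
    simp only [map_smul, Module.Basis.repr_self, Finsupp.smul_single, smul_eq_mul, mul_one,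
      Finsupp.single_apply]
    simp
  have hπsurj : Function.Surjective π := by
    intro y
    choose z hz using fun j => ZMod.intCast_surjective (n := m j) (y j)
    refine ⟨∑ j, z j • bM j, ?_⟩
    funext j
    show ((bM.repr _ j : ℤ) : ZMod (m j)) = y j
    rw [hrepr, hz]
  have hNspan : N = Submodule.span ℤ (Set.range fun i => d i • bM (f i)) := by
    have h2 : Submodule.map N.subtype (Submodule.span ℤ (Set.range bN))
        = Submodule.span ℤ (Set.range fun i => d i • bM (f i)) := by
      rw [Submodule.map_span]
      congr 1
      rw [← Set.range_comp]
      exact congrArg _ (funext fun i => hsnf i)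
    rw [← h2, bN.span_eq, Submodule.map_subtype_top]
  have hπker : π.ker = AddSubgroup.closure X := by
    rw [← Submodule.span_int_eq_addSubgroupClosure, ← hN]
    ext x
    rw [AddMonoidHom.mem_ker]
    constructor
    · intro hx
      have hdvd : ∀ j, (m j : ℤ) ∣ bM.repr x j := by
        intro j
        rw [← ZMod.intCast_zmod_eq_zero_iff_dvd]
        exact congrFun hx j
      rw [← bM.sum_repr x]
      refine Submodule.sum_mem N fun j _ => ?_
      by_cases hj : j ∈ Set.range ⇑f
      · obtain ⟨i, rfl⟩ := hj
        have : d i ∣ bM.repr x (f i) := by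
          have := hdvd (f i)
          rwa [hmf i, Int.natAbs_dvd] at this
        obtain ⟨t, ht⟩ := this
        rw [ht, mul_comm, mul_smul]
        refine Submodule.smul_mem N t ?_
        rw [← hsnf i]
        exact SetLike.coe_mem (bN i)
      · have : bM.repr x j = 0 := by
          have := hdvd j
          rwa [hm0 j hj, Nat.cast_zero, zero_dvd_iff] at this
        rw [this, zero_smul]
        exact Submodule.zero_mem N
    · intro hx
      rw [Submodule.mem_toAddSubgroup, hNspan, Submodule.mem_span_range_iff_exists_fun] at hx
      obtain ⟨c, hc⟩ := hx
      have hxr : ∀ j, bM.repr x j = ∑ i, if f i = j then c i * d i else 0 := by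
        intro j
        rw [← hc]
        have : ∀ i : Fin n, c i • d i • bM (f i) = (c i * d i) • bM (f i) := by
          intro i; rw [mul_smul]
        simp_rw [this]
        rw [map_sum, Finsupp.finset_sum_apply]
        simp only [map_smul, Module.Basis.repr_self, Finsupp.smul_single, smul_eq_mul, mul_one,
          Finsupp.single_apply]
      funext j
      show ((bM.repr x j : ℤ) : ZMod (m j)) = 0
      rw [ZMod.intCast_zmod_eq_zero_iff_dvd, hxr j]
      by_cases hj : j ∈ Set.range ⇑f
      · obtain ⟨i0, rfl⟩ := hj
        rw [Finset.sum_eq_single i0]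
        · rw [if_pos rfl, hmf i0]
          exact Dvd.dvd.mul_left (Int.natAbs_dvd_self ..) (c i0)
        · intro i _ hi
          rw [if_neg (fun h => hi (f.injective h))]
        · intro h; exact absurd (Finset.mem_univ i0) h
      · rw [hm0 j hj, Nat.cast_zero]
        rw [Finset.sum_eq_zero]
        intro i _
        rw [if_neg (fun h => hj ⟨i, h⟩)]
  -- the quotient is the product of cyclic groups
  have eQ : ((Fin ℓ → ℤ) ⧸ AddSubgroup.closure X) ≃+ (∀ j, ZMod (m j)) :=
    (QuotientAddGroup.quotientAddEquivOfEq hπker.symm).trans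
      (QuotientAddGroup.quotientKerEquivOfSurjective π hπsurj)
  -- torsion characterization
  have htor : ∀ x : (∀ j, ZMod (m j)), IsOfFinAddOrder x ↔ ∀ j ∉ Set.range ⇑f, x j = 0 := by
    intro x
    constructor
    · intro hx j hj
      exact zmod_finite_order_eq_zero (hm0 j hj) (x j) (hx.apply j)
    · intro hx
      rw [isOfFinAddOrder_iff_nsmul_eq_zero]
      refine ⟨∏ j ∈ Finset.univ.filter (fun j => j ∈ Set.range ⇑f), m j, ?_, ?_⟩
      · refine Finset.prod_pos fun j hj => ?_
        exact Nat.pos_of_ne_zero (hmne j (Finset.mem_filter.mp hj).2)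
      · funext j
        by_cases hj : j ∈ Set.range ⇑f
        · obtain ⟨t, ht⟩ := Finset.dvd_prod_of_mem m
            (Finset.mem_filter.mpr ⟨Finset.mem_univ j, hj⟩)
          show (_ • x) j = 0
          rw [Pi.smul_apply, ht, mul_comm, mul_nsmul, zmod_nsmul_self]
        · show (_ • x) j = 0
          rw [Pi.smul_apply, hx j hj, nsmul_zero]
  -- the subgroup corresponding to the torsion part
  set K : AddSubgroup (∀ j, ZMod (m j)) :=
    { carrier := {x | ∀ j ∉ Set.range ⇑f, x j = 0}
      zero_mem' := fun j _ => rfl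
      add_mem' := by intro x y hx hy j hj; simp [hx j hj, hy j hj]
      neg_mem' := by intro x hx j hj; simp [hx j hj] } with hK
  have hfin : ∀ x, IsOfFinAddOrder x → IsOfFinAddOrder (eQ x) := fun x hx =>
    (Function.Injective.isOfFinAddOrder_iff (f := eQ.toAddMonoidHom) eQ.injective).mpr hx
  have hfin' : ∀ y, IsOfFinAddOrder y → IsOfFinAddOrder (eQ.symm y) := fun y hy =>
    (Function.Injective.isOfFinAddOrder_iff (f := eQ.symm.toAddMonoidHom) eQ.symm.injective).mpr hy
  have hKtor : AddSubgroup.map eQ.toAddMonoidHom (AddCommGroup.torsion _) = K := by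
    ext y
    simp only [AddSubgroup.mem_map]
    constructor
    · rintro ⟨x, hx, rfl⟩
      exact (htor (eQ.toAddMonoidHom x)).mp (hfin x ((AddCommGroup.mem_torsion x).mp hx))
    · intro hy
      refine ⟨eQ.symm y, (AddCommGroup.mem_torsion _).mpr ?_, by simp⟩
      exact hfin' y ((htor y).mpr hy)
  have eT : (AddCommGroup.torsion ((Fin ℓ → ℤ) ⧸ AddSubgroup.closure X)) ≃+
      (∀ j : {j // j ∈ Set.range ⇑f}, ZMod (m j.1)) := by
    refine ((eQ.addSubgroupMap (AddCommGroup.torsion _)).trans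
      (AddEquiv.addSubgroupCongr hKtor)).trans ?_
    exact
    { toFun := fun x j => x.1 j.1
      invFun := fun y => ⟨fun j => if h : j ∈ Set.range ⇑f then y ⟨j, h⟩ else 0,
        fun j hj => dif_neg hj⟩
      left_inv := by
        intro x
        refine Subtype.ext (funext fun j => ?_)
        by_cases h : j ∈ Set.range ⇑f
        · simp [h]
        · simp [h, x.2 j h]
      right_inv := by
        intro y
        funext j
        simp [dif_pos j.2]
      map_add' := fun x y => rfl }
  -- the exponent of the torsion part
  have hexp : ∀ j ∈ Set.range ⇑f, m j ∣ AddMonoid.exponent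
      (AddCommGroup.torsion ((Fin ℓ → ℤ) ⧸ AddSubgroup.closure X)) := by
    intro j hj
    rw [AddMonoid.exponent_eq_of_addEquiv eT, AddMonoid.exponent_pi]
    have := Finset.dvd_lcm (s := (Finset.univ : Finset {j // j ∈ Set.range ⇑f}))
      (f := fun j => AddMonoid.exponent (ZMod (m j.1))) (Finset.mem_univ ⟨j, hj⟩)
    simpa [ZMod.exponent] using this
  -- the rank
  have hrk : rk (Fin ℓ → ℤ) X = n := by
    have hc : AddSubgroup.closure X = N.toAddSubgroup :=
      (Submodule.span_int_eq_addSubgroupClosure X).symm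
    have e : (N.toAddSubgroup : Type _) ≃ₗ[ℤ] N :=
      { toFun := fun x => ⟨x.1, x.2⟩
        invFun := fun x => ⟨x.1, x.2⟩
        map_add' := fun _ _ => rfl
        map_smul' := fun c x => rfl
        left_inv := fun _ => rfl
        right_inv := fun _ => rfl }
    have etot : (AddSubgroup.closure X : Type _) ≃ₗ[ℤ] N :=
      (AddEquiv.addSubgroupCongr hc).toIntLinearEquiv.trans e
    rw [rk, etot.finrank_eq, Module.finrank_eq_card_basis bN, Fintype.card_fin]
  -- counting homomorphisms
  have eHom : (((Fin ℓ → ℤ) ⧸ AddSubgroup.closure X) →+ ZMod q) ≃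
      {φ : (Fin ℓ → ℤ) →+ ZMod q // ∀ x ∈ X, φ x = 0} := by
    refine
    { toFun := fun ψ => ⟨ψ.comp (QuotientAddGroup.mk' _), fun x hx => ?_⟩
      invFun := fun φ => QuotientAddGroup.lift _ φ.1 (fun x hx => ?_)
      left_inv := ?_
      right_inv := ?_ }
    · show ψ ((QuotientAddGroup.mk' _) x) = 0
      rw [show (QuotientAddGroup.mk' _) x = 0 from
        (QuotientAddGroup.eq_zero_iff x).mpr (AddSubgroup.subset_closure hx), map_zero]
    · exact (AddSubgroup.closure_le _).mpr (fun y hy => φ.2 y hy) hx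
    · intro ψ
      refine AddMonoidHom.ext fun z => ?_
      induction z using QuotientAddGroup.induction_on
      rfl
    · intro φ
      exact Subtype.ext (AddMonoidHom.ext fun x => rfl)
  have hLHS : Nat.card {φ : (Fin ℓ → ℤ) →+ ZMod q // ∀ x ∈ X, φ x = 0}
      = ∏ j, Nat.gcd (m j) q := by
    rw [← Nat.card_congr eHom,
      Nat.card_congr eQ.addMonoidHomCongrLeftEquiv,
      card_hom_pi]
  have hmult : mult (Fin ℓ → ℤ) (ZMod k) X
      = ∏ j ∈ Finset.univ.filter (fun j => j ∈ Set.range ⇑f), Nat.gcd (m j) k := by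
    rw [mult, Nat.card_congr eT.addMonoidHomCongrLeftEquiv,
      card_hom_pi]
    exact (Finset.prod_subtype _ (fun j => Finset.mem_filter.trans
      (by simp)) (fun j => Nat.gcd (m j) k)).symm
  -- final computation
  rw [hLHS, hmult, hrk]
  rw [← Finset.prod_filter_mul_prod_filter_not Finset.univ (fun j => j ∈ Set.range ⇑f)
    (fun j => Nat.gcd (m j) q)]
  have hcards : (Finset.univ.filter (fun j => j ∈ Set.range ⇑f)).card = n := by
    have himg : Finset.univ.filter (fun j => j ∈ Set.range ⇑f) = Finset.univ.image f := by
      ext j; simp [Set.mem_range]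
    rw [himg, Finset.card_image_of_injective _ f.injective, Finset.card_univ, Fintype.card_fin]
  congr 1
  · exact Finset.prod_congr rfl fun j hj =>
      hgcd (m j) (hexp j (Finset.mem_filter.mp hj).2)
  · have h2 : ∀ j ∈ Finset.univ.filter (fun j => ¬ j ∈ Set.range ⇑f),
        Nat.gcd (m j) q = q := by
      intro j hj
      rw [hm0 j (Finset.mem_filter.mp hj).2, Nat.gcd_zero_left]
    rw [Finset.prod_congr rfl h2, Finset.prod_const]
    congr 1
    have := Finset.card_filter_add_card_filter_not
      (s := (Finset.univ : Finset (Fin ℓ))) (p := fun j => j ∈ Set.range ⇑f)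
    rw [Finset.card_univ, Fintype.card_fin] at this
    omega


/-- The constituents of the characteristic quasi-polynomial: if `gcd(q, ρ_𝒜) = k` then
`#M(𝒜; ℤ^ℓ, ℤ/qℤ) = χ_𝒜^{ℤ/kℤ}(q) = Σ_{𝒮⊆𝒜} (-1)^{#𝒮} m(𝒮; ℤ/kℤ) q^{ℓ - r_𝒮}`. -/
theorem constituent_eq_char {ι : Type*} (ℓ : ℕ) (A : Finset ι) (a : ι → (Fin ℓ → ℤ))
    (k q : ℕ) (hk : 1 ≤ k) (hkdvd : k ∣ rho (Fin ℓ → ℤ) A a) (hq : 0 < q)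
    (hgcd : Nat.gcd q (rho (Fin ℓ → ℤ) A a) = k) :
    (Nat.card {φ : (Fin ℓ → ℤ) →+ ZMod q // ∀ i ∈ A, φ (a i) ≠ 0} : ℤ) =
      ∑ S ∈ A.powerset, (-1 : ℤ) ^ S.card *
        (mult (Fin ℓ → ℤ) (ZMod k) (a '' (S : Set ι)) : ℤ) *
        (q : ℤ) ^ (ℓ - rk (Fin ℓ → ℤ) (a '' (S : Set ι))) := by
  classical
  haveI : NeZero q := ⟨hq.ne'⟩
  haveI : NeZero k := ⟨Nat.one_le_iff_ne_zero.mp hk⟩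
  -- the hom group is finite
  have eΦ : ((Fin ℓ → ℤ) →+ ZMod q) ≃ (Fin ℓ → ZMod q) :=
    (addMonoidHomLequivInt ℤ).toEquiv.trans
      ((LinearMap.lsum ℤ (fun _ : Fin ℓ => ℤ) ℤ (M := ZMod q)).symm.toEquiv.trans
        (Equiv.piCongrRight fun _ => (LinearMap.ringLmapEquivSelf ℤ ℤ (ZMod q)).toEquiv))
  haveI : Fintype ((Fin ℓ → ℤ) →+ ZMod q) := Fintype.ofEquiv _ eΦ.symm
  have hIE := incl_excl A (fun i (φ : (Fin ℓ → ℤ) →+ ZMod q) => φ (a i) = 0)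
  rw [hIE]
  refine Finset.sum_congr rfl fun S hS => ?_
  have hSsub : S ∈ A.powerset := hS
  -- the per-sublist count
  have hsub : Nat.card {φ : (Fin ℓ → ℤ) →+ ZMod q // ∀ i ∈ S, φ (a i) = 0}
      = Nat.card {φ : (Fin ℓ → ℤ) →+ ZMod q // ∀ x ∈ a '' (S : Set ι), φ x = 0} := by
    refine Nat.card_congr (Equiv.subtypeEquivRight fun φ => ?_)
    constructor
    · intro h x hx
      obtain ⟨i, hi, rfl⟩ := hx
      exact h i hi
    · intro h i hi
      exact h (a i) ⟨i, hi, rfl⟩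
  have hkq : k ∣ q := hgcd ▸ Nat.gcd_dvd_left q _
  have hkey := key_count ℓ q k (a '' (S : Set ι)) ?_
  · rw [hsub, hkey]
    push_cast
    ring
  · intro r hr
    have h1 : r ∣ rho (Fin ℓ → ℤ) A a :=
      hr.trans (Finset.dvd_lcm hSsub)
    refine Nat.dvd_antisymm ?_ ?_
    · refine Nat.dvd_gcd (Nat.gcd_dvd_left r q) ?_
      rw [← hgcd]
      exact Nat.dvd_gcd (Nat.gcd_dvd_right r q) ((Nat.gcd_dvd_left r q).trans h1)
    · exact Nat.dvd_gcd (Nat.gcd_dvd_left r k) ((Nat.gcd_dvd_right r k).trans hkq)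
end

section
/- Let Γ be a finitely generated abelian group, 𝒜 a finite list in Γ, G a torsion-wise finite abelian group, α ∈ 𝒜, and 𝒜', 𝒜'' the deletion and contraction. Then the G-characteristic polynomials satisfy χ_𝒜^G(t) = χ_{𝒜'}^G(t) − χ_{𝒜''}^G(t). -/
def TorsionwiseFinite (G : Type*) [AddCommGroup G] : Prop :=
  ∀ d : ℕ, 0 < d → Finite {x : G // d • x = 0}

/-- The `G`-characteristic polynomial `χ_𝒜^G(t) = Σ_𝒮 (-1)^{#𝒮} m(𝒮;G) t^{r_Γ - r_𝒮}`,
evaluated at an integer `t`. -/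
noncomputable def chipoly {ι Γ : Type*} [AddCommGroup Γ] (G : Type*) [AddCommGroup G]
    (A : Finset ι) (a : ι → Γ) (t : ℤ) : ℤ :=
  ∑ S ∈ A.powerset, (-1 : ℤ) ^ S.card * (mult Γ G (a '' (S : Set ι)) : ℤ) *
    t ^ (Module.finrank ℤ Γ - rk Γ (a '' (S : Set ι)))

open AddSubgroup QuotientAddGroup

section Aux

variable {M N : Type*} [AddCommGroup M] [AddCommGroup N]

noncomputable def torsionCongr (e : M ≃+ N) :
    AddCommGroup.torsion M ≃+ AddCommGroup.torsion N := by
  have h : (AddCommGroup.torsion M).map e.toAddMonoidHom = AddCommGroup.torsion N := by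
    ext y
    simp only [AddSubgroup.mem_map]
    constructor
    · rintro ⟨x, hx, rfl⟩
      exact e.toAddMonoidHom.isOfFinAddOrder hx
    · intro hy
      exact ⟨e.symm y, e.symm.toAddMonoidHom.isOfFinAddOrder hy, e.apply_symm_apply y⟩
  exact (e.addSubgroupMap _).trans (AddEquiv.addSubgroupCongr h)

lemma finrank_int_congr (e : M ≃+ N) : Module.finrank ℤ M = Module.finrank ℤ N :=
  e.toIntLinearEquiv.finrank_eq

def quotIntSubmoduleEquiv (K : AddSubgroup M) :
    (M ⧸ AddSubgroup.toIntSubmodule K) ≃+ (M ⧸ K) :=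
  AddEquiv.refl _

def subIntSubmoduleEquiv (K : AddSubgroup M) :
    (AddSubgroup.toIntSubmodule K) ≃+ K :=
  AddEquiv.refl _

lemma finrank_quot_aux [Module.Finite ℤ M] (K : AddSubgroup M) :
    Module.finrank ℤ (M ⧸ K) + Module.finrank ℤ K = Module.finrank ℤ M := by
  have h := Submodule.finrank_quotient_add_finrank (R := ℤ) (AddSubgroup.toIntSubmodule K)
  rwa [finrank_int_congr (quotIntSubmoduleEquiv K), finrank_int_congr (subIntSubmoduleEquiv K)]
    at h

lemma moduleFinite_addSubgroup [Module.Finite ℤ M] (H : AddSubgroup M) :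
    Module.Finite ℤ H := by
  haveI : IsNoetherian ℤ M := isNoetherian_of_isNoetherianRing_of_finite ℤ M
  haveI : Module.Finite ℤ (AddSubgroup.toIntSubmodule H) := inferInstance
  exact Module.Finite.equiv (subIntSubmoduleEquiv H).toIntLinearEquiv

variable (α : M) (X : Set M)

lemma closure_image_mk :
    closure ((QuotientAddGroup.mk' (closure {α})) '' X)
      = (closure (insert α X)).map (QuotientAddGroup.mk' (closure {α})) := by
  have hα : (QuotientAddGroup.mk' (closure {α})) α = 0 :=
    (QuotientAddGroup.eq_zero_iff α).mpr (subset_closure rfl)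
  rw [AddMonoidHom.map_closure, Set.image_insert_eq, hα, Set.insert_eq, AddSubgroup.closure_union,
    closure_singleton_zero, bot_sup_eq]

noncomputable def contractionEquiv :
    (M ⧸ closure (insert α X)) ≃+
      ((M ⧸ closure {α}) ⧸ closure ((QuotientAddGroup.mk' (closure {α})) '' X)) := by
  have hle : closure {α} ≤ closure (insert α X) :=
    closure_mono (Set.singleton_subset_iff.mpr (Set.mem_insert α X))
  exact ((quotientQuotientEquivQuotient (closure {α}) (closure (insert α X)) hle).symm.trans
    (quotientAddEquivOfEq (closure_image_mk α X).symm))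

lemma mult_contract (G : Type*) [AddCommGroup G] :
    mult M G (insert α X)
      = mult (M ⧸ closure {α}) G ((QuotientAddGroup.mk' (closure {α})) '' X) :=
  Nat.card_congr
    (AddEquiv.addMonoidHomCongrLeftEquiv (N := G) (torsionCongr (contractionEquiv α X)))

lemma rk_contract [Module.Finite ℤ M] :
    Module.finrank ℤ M - rk M (insert α X)
      = Module.finrank ℤ (M ⧸ closure {α})
        - rk (M ⧸ closure {α}) ((QuotientAddGroup.mk' (closure {α})) '' X) := by
  set K : AddSubgroup M := closure {α} with hK
  set H : AddSubgroup M := closure (insert α X) with hH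
  have hle : K ≤ H := closure_mono (Set.singleton_subset_iff.mpr (Set.mem_insert α X))
  haveI : Module.Finite ℤ H := moduleFinite_addSubgroup H
  -- the isomorphism H ⧸ (K.addSubgroupOf H) ≃+ closure (π '' X)
  set f : H →+ (M ⧸ K) := (QuotientAddGroup.mk' K).comp H.subtype with hf
  have hker : K.addSubgroupOf H = f.ker := by
    rw [hf, ← AddMonoidHom.comap_ker, QuotientAddGroup.ker_mk']
    rfl
  have hrange : f.range = closure ((QuotientAddGroup.mk' K) '' X) := by
    rw [hf, AddMonoidHom.range_comp, AddSubgroup.range_subtype, closure_image_mk]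
  have e1 : (H ⧸ K.addSubgroupOf H) ≃+ closure ((QuotientAddGroup.mk' K) '' X) :=
    ((quotientAddEquivOfEq hker).trans (quotientKerEquivRange f)).trans
      (AddEquiv.addSubgroupCongr hrange)
  have e2 : (K.addSubgroupOf H) ≃+ K := addSubgroupOfEquivOfLe hle
  have h1 : Module.finrank ℤ (M ⧸ K) + Module.finrank ℤ K = Module.finrank ℤ M :=
    finrank_quot_aux K
  have h2 : Module.finrank ℤ (H ⧸ K.addSubgroupOf H) + Module.finrank ℤ (K.addSubgroupOf H)
      = Module.finrank ℤ H := finrank_quot_aux (K.addSubgroupOf H)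
  rw [finrank_int_congr e1, finrank_int_congr e2] at h2
  show Module.finrank ℤ M - Module.finrank ℤ H
      = Module.finrank ℤ (M ⧸ K) - Module.finrank ℤ (closure ((QuotientAddGroup.mk' K) '' X))
  rw [← h1, ← h2, Nat.add_sub_add_right]

end Aux


/-- Deletion-contraction for the `G`-characteristic polynomial:
`χ_𝒜^G(t) = χ_{𝒜'}^G(t) - χ_{𝒜''}^G(t)`. -/
theorem char_deletion_contraction {ι Γ : Type*} [DecidableEq ι] [AddCommGroup Γ]
    [AddGroup.FG Γ] (G : Type*) [AddCommGroup G] (hG : TorsionwiseFinite G)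
    (A : Finset ι) (a : ι → Γ) (i₀ : ι) (hi₀ : i₀ ∈ A) (t : ℤ) :
    chipoly G A a t = chipoly G (A.erase i₀) a t -
      chipoly G (A.erase i₀)
        (fun i => QuotientAddGroup.mk' (AddSubgroup.closure ({a i₀} : Set Γ)) (a i)) t := by
  classical
  haveI : Module.Finite ℤ Γ := Module.Finite.iff_addGroup_fg.mpr ‹_›
  obtain ⟨B, hiB, hAB⟩ : ∃ B, i₀ ∉ B ∧ A = insert i₀ B :=
    ⟨A.erase i₀, Finset.notMem_erase i₀ A, (Finset.insert_erase hi₀).symm⟩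
  have hBA : A.erase i₀ = B := by rw [hAB, Finset.erase_insert hiB]
  rw [hBA]
  conv_lhs => rw [chipoly, hAB, Finset.sum_powerset_insert hiB]
  rw [sub_eq_add_neg]
  congr 1
  rw [chipoly, ← Finset.sum_neg_distrib]
  refine Finset.sum_congr rfl fun S hS => ?_
  have hiS : i₀ ∉ S := fun h => hiB (Finset.mem_powerset.mp hS h)
  have hcard : (insert i₀ S).card = S.card + 1 := Finset.card_insert_of_notMem hiS
  have himg : (a '' ((insert i₀ S : Finset ι) : Set ι)) = insert (a i₀) (a '' (S : Set ι)) := by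
    rw [Finset.coe_insert, Set.image_insert_eq]
  have himg2 : ((fun i => QuotientAddGroup.mk' (AddSubgroup.closure ({a i₀} : Set Γ)) (a i))
      '' (S : Set ι)) = (QuotientAddGroup.mk' (AddSubgroup.closure ({a i₀} : Set Γ)))
        '' (a '' (S : Set ι)) := by
    rw [Set.image_image]
  rw [hcard, himg, himg2, mult_contract (a i₀) (a '' (S : Set ι)) G,
    rk_contract (a i₀) (a '' (S : Set ι)), pow_succ]
  ring
end

section
/- Let 𝒜 be a finite list in a finitely generated abelian group Γ and G a torsion-wise finite abelian group. If 𝒮 ⊂ 𝒯 ⊂ 𝒜 are sublists with r_𝒮 = r_𝒯, then ρ_𝒯(𝒮; G) := Σ_{𝒮⊂ℬ⊂𝒯} (−1)^{#ℬ−#𝒮} m(ℬ; G) is a nonnegative integer; in fact it equals the cardinality of the set of homomorphisms φ : Γ'/⟨𝒮⟩ → G with φ(ᾱ) ≠ 0 for all α ∈ 𝒯\𝒮, where Γ' = {g ∈ Γ : n·g ∈ ⟨𝒮⟩ for some n > 0}. -/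
/-- The saturation `Γ' = {g ∈ Γ | ∃ n > 0, n • g ∈ H}` of a subgroup `H`. -/
def sat {Γ : Type*} [AddCommGroup Γ] (H : AddSubgroup Γ) : AddSubgroup Γ where
  carrier := {g | ∃ n : ℕ, 0 < n ∧ n • g ∈ H}
  zero_mem' := ⟨1, Nat.one_pos, by simpa using H.zero_mem⟩
  add_mem' := by
    rintro x y ⟨m, hm, hx⟩ ⟨n, hn, hy⟩
    refine ⟨m * n, Nat.mul_pos hm hn, ?_⟩
    rw [smul_add]
    exact add_mem (by rw [mul_comm, mul_smul]; exact AddSubgroup.nsmul_mem H hx n)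
      (by rw [mul_smul]; exact AddSubgroup.nsmul_mem H hy m)
  neg_mem' := by
    rintro x ⟨n, hn, hx⟩
    exact ⟨n, hn, by rw [smul_neg]; exact AddSubgroup.neg_mem H hx⟩

section AuxLemmas

open AddSubgroup

variable {Γ : Type*} [AddCommGroup Γ]

lemma mem_sat {H : AddSubgroup Γ} {x : Γ} : x ∈ sat H ↔ ∃ n : ℕ, 0 < n ∧ n • x ∈ H := Iff.rfl

lemma le_sat (H : AddSubgroup Γ) : H ≤ sat H := fun x hx => ⟨1, one_pos, by simpa using hx⟩

lemma sat_mono {H K : AddSubgroup Γ} (h : H ≤ K) : sat H ≤ sat K := by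
  rintro x ⟨n, hn, hx⟩; exact ⟨n, hn, h hx⟩

lemma sat_eq_of_le_of_le_sat {H K : AddSubgroup Γ} (h1 : H ≤ K) (h2 : K ≤ sat H) :
    sat K = sat H := by
  refine le_antisymm ?_ (sat_mono h1)
  rintro x ⟨n, hn, hx⟩
  obtain ⟨m, hm, hmx⟩ := h2 hx
  exact ⟨m * n, Nat.mul_pos hm hn, by rwa [mul_smul]⟩

lemma mem_sat_of_finrank_eq [AddGroup.FG Γ] {N M : AddSubgroup Γ} (hNM : N ≤ M)
    (h : Module.finrank ℤ N = Module.finrank ℤ M) {x : Γ} (hx : x ∈ M) :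
    x ∈ sat N := by
  haveI : Module.Finite ℤ Γ := Module.Finite.iff_addGroup_fg.mpr ‹_›
  by_contra hc
  rw [mem_sat] at hc; push_neg at hc
  set V : Submodule ℤ Γ := AddSubgroup.toIntSubmodule M with hV
  set W : Submodule ℤ ↥V := (AddSubgroup.toIntSubmodule N).comap V.subtype with hWdef
  haveI : Module.Finite ℤ ↥V := Module.finite_def.mpr (IsNoetherian.noetherian ⊤)
  haveI : Module.Finite ℤ ↥W := Module.finite_def.mpr (IsNoetherian.noetherian ⊤)
  haveI : Module.Finite ℤ (↥V ⧸ W) := Module.Finite.quotient ℤ W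
  have hxV : x ∈ V := hx
  have hW : Module.finrank ℤ W = Module.finrank ℤ V := by
    have e := Submodule.comapSubtypeEquivOfLe (p := AddSubgroup.toIntSubmodule N) (q := V)
      (fun y hy => hNM hy)
    rw [LinearEquiv.finrank_eq e]
    exact h
  -- the class of x in V ⧸ W is not torsion
  have hxq : ∀ c : ℤ, c • (Submodule.Quotient.mk (⟨x, hxV⟩ : V) : ↥V ⧸ W) = 0 → c = 0 := by
    intro c hcq
    by_contra hc0
    rw [← Submodule.Quotient.mk_smul, Submodule.Quotient.mk_eq_zero] at hcq
    have hmem : (c • x) ∈ N := hcq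
    refine hc c.natAbs (Int.natAbs_pos.mpr hc0) ?_
    rw [← natCast_zsmul]
    rcases Int.natAbs_eq c with h1 | h1
    · rw [← h1]; exact hmem
    · have h2 : (c.natAbs : ℤ) = -c := by omega
      rw [h2, neg_smul]
      exact N.neg_mem hmem
  have hLI : LinearIndependent ℤ
      (fun _ : Unit => (Submodule.Quotient.mk (⟨x, hxV⟩ : V) : ↥V ⧸ W)) := by
    rw [linearIndependent_iff]
    intro l hl
    rw [Finsupp.linearCombination_unique] at hl
    exact Finsupp.unique_ext (hxq _ hl)
  have h1 : (1 : Cardinal) ≤ Module.rank ℤ (↥V ⧸ W) := by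
    simpa using hLI.cardinal_lift_le_rank
  have hadd := Submodule.rank_quotient_add_rank W
  rw [← Module.finrank_eq_rank ℤ (↥V ⧸ W), ← Module.finrank_eq_rank ℤ ↥W,
    ← Module.finrank_eq_rank ℤ ↥V, ← Nat.cast_add, Nat.cast_inj] at hadd
  rw [← Module.finrank_eq_rank ℤ (↥V ⧸ W), Nat.one_le_cast] at h1
  have hWV : Module.finrank ℤ ↥W = Module.finrank ℤ ↥V := hW
  omega

variable (Γ) in
/-- The natural map from the saturation of `K` to the torsion of `Γ ⧸ K`. -/
def satToTorsion (K : AddSubgroup Γ) : (sat K) →+ AddCommGroup.torsion (Γ ⧸ K) where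
  toFun g := ⟨QuotientAddGroup.mk (g : Γ), by
    obtain ⟨n, hn, hng⟩ := g.2
    refine isOfFinAddOrder_iff_nsmul_eq_zero.mpr ⟨n, hn, ?_⟩
    rw [← QuotientAddGroup.mk_nsmul]
    exact (QuotientAddGroup.eq_zero_iff _).mpr hng⟩
  map_zero' := Subtype.ext (by simp)
  map_add' x y := Subtype.ext (by simp)

lemma satToTorsion_surjective (K : AddSubgroup Γ) :
    Function.Surjective (satToTorsion Γ K) := by
  rintro ⟨q, hq⟩
  obtain ⟨g, rfl⟩ := QuotientAddGroup.mk_surjective q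
  obtain ⟨n, hn, hng⟩ := isOfFinAddOrder_iff_nsmul_eq_zero.mp hq
  rw [← QuotientAddGroup.mk_nsmul, QuotientAddGroup.eq_zero_iff] at hng
  exact ⟨⟨g, n, hn, hng⟩, rfl⟩

lemma ker_satToTorsion (K : AddSubgroup Γ) :
    (satToTorsion Γ K).ker = K.addSubgroupOf (sat K) := by
  ext g
  simp only [AddMonoidHom.mem_ker, AddSubgroup.mem_addSubgroupOf]
  constructor
  · intro hg
    have : (QuotientAddGroup.mk (g : Γ) : Γ ⧸ K) = 0 := congrArg Subtype.val hg
    exact (QuotientAddGroup.eq_zero_iff _).mp this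
  · intro hg
    exact Subtype.ext ((QuotientAddGroup.eq_zero_iff _).mpr hg)

variable (Γ) in
/-- `Γ' ⧸ K ≃+ torsion (Γ ⧸ K)` where `Γ' = sat K`. -/
noncomputable def torsionQuotEquiv (K : AddSubgroup Γ) :
    ((sat K) ⧸ K.addSubgroupOf (sat K)) ≃+ AddCommGroup.torsion (Γ ⧸ K) :=
  (QuotientAddGroup.quotientAddEquivOfEq (ker_satToTorsion K)).symm.trans
    (QuotientAddGroup.quotientKerEquivOfSurjective _ (satToTorsion_surjective K))

/-- Homs from a quotient correspond to homs vanishing on the subgroup. -/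
def quotHomEquiv {A G : Type*} [AddCommGroup A] [AddCommGroup G] (N : AddSubgroup A) :
    ((A ⧸ N) →+ G) ≃ {ψ : A →+ G // ∀ x ∈ N, ψ x = 0} where
  toFun φ := ⟨φ.comp (QuotientAddGroup.mk' N), fun x hx => by
    show φ (QuotientAddGroup.mk x) = 0
    rw [(QuotientAddGroup.eq_zero_iff x).mpr hx, map_zero]⟩
  invFun ψ := QuotientAddGroup.lift N ψ.1 (fun x hx => ψ.2 x hx)
  left_inv φ := by
    ext q
    rfl
  right_inv ψ := by
    ext x
    rfl

lemma finite_addMonoidHom_of_torsionwiseFinite {Q G : Type*} [AddCommGroup Q] [AddCommGroup G]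
    [Finite Q] (hG : TorsionwiseFinite G) : Finite (Q →+ G) := by
  set d := Nat.card Q with hd
  haveI := hG d Nat.card_pos
  refine Finite.of_injective (fun φ : Q →+ G => fun q : Q =>
    (⟨φ q, by rw [← map_nsmul, card_nsmul_eq_zero', map_zero]⟩ : {x : G // d • x = 0})) ?_
  intro φ ψ h
  ext q
  exact congrArg Subtype.val (congrFun h q)

/-- Inclusion-exclusion. -/
lemma inclExcl {ι X : Type*} [DecidableEq ι] [Fintype X] (U : Finset ι)
    (P : ι → X → Prop) [∀ i x, Decidable (P i x)] :
    ∑ C ∈ U.powerset, (-1 : ℤ) ^ C.card *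
        ((Finset.univ.filter (fun x => ∀ i ∈ C, P i x)).card : ℤ) =
      ((Finset.univ.filter (fun x => ∀ i ∈ U, ¬ P i x)).card : ℤ) := by
  have key : ∀ x : X, ∑ C ∈ U.powerset, (-1 : ℤ) ^ C.card *
      (if ∀ i ∈ C, P i x then 1 else 0) = (if ∀ i ∈ U, ¬ P i x then 1 else 0) := by
    intro x
    have hps : U.powerset.filter (fun C => ∀ i ∈ C, P i x) = (U.filter (fun i => P i x)).powerset := by
      ext C
      simp only [Finset.mem_filter, Finset.mem_powerset, Finset.subset_iff, Finset.mem_filter]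
      constructor
      · rintro ⟨h1, h2⟩ i hi; exact ⟨h1 hi, h2 i hi⟩
      · intro h1; exact ⟨fun i hi => (h1 hi).1, fun i hi => (h1 hi).2⟩
    calc ∑ C ∈ U.powerset, (-1 : ℤ) ^ C.card * (if ∀ i ∈ C, P i x then 1 else 0)
        = ∑ C ∈ U.powerset.filter (fun C => ∀ i ∈ C, P i x), (-1 : ℤ) ^ C.card := by
          rw [Finset.sum_filter]
          exact Finset.sum_congr rfl (fun C _ => by rw [mul_ite, mul_one, mul_zero])
      _ = ∑ C ∈ (U.filter (fun i => P i x)).powerset, (-1 : ℤ) ^ C.card := by rw [hps]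
      _ = if U.filter (fun i => P i x) = ∅ then 1 else 0 :=
          Finset.sum_powerset_neg_one_pow_card
      _ = if ∀ i ∈ U, ¬ P i x then 1 else 0 := by
          congr 1
          simp [Finset.filter_eq_empty_iff]
  calc ∑ C ∈ U.powerset, (-1 : ℤ) ^ C.card *
        ((Finset.univ.filter (fun x => ∀ i ∈ C, P i x)).card : ℤ)
      = ∑ C ∈ U.powerset, ∑ x : X, (-1 : ℤ) ^ C.card * (if ∀ i ∈ C, P i x then 1 else 0) := by
        refine Finset.sum_congr rfl (fun C _ => ?_)
        rw [← Finset.mul_sum]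
        congr 1
        rw [Finset.card_filter]
        push_cast
        rfl
    _ = ∑ x : X, ∑ C ∈ U.powerset, (-1 : ℤ) ^ C.card * (if ∀ i ∈ C, P i x then 1 else 0) :=
        Finset.sum_comm
    _ = ∑ x : X, (if ∀ i ∈ U, ¬ P i x then 1 else 0) := Finset.sum_congr rfl (fun x _ => key x)
    _ = ((Finset.univ.filter (fun x => ∀ i ∈ U, ¬ P i x)).card : ℤ) := by
        rw [Finset.card_filter]
        push_cast
        rfl

end AuxLemmas

/-- Axiom (4) for `G`-multiplicities: if `𝒮 ⊆ 𝒯` and `r_𝒮 = r_𝒯`, then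
`ρ_𝒯(𝒮;G) = Σ_{𝒮⊆ℬ⊆𝒯}(-1)^{#ℬ-#𝒮} m(ℬ;G)` equals the number of homomorphisms
`φ : Γ'/⟨𝒮⟩ → G` (with `Γ'` the saturation of `⟨𝒮⟩`) not vanishing on any element of
`𝒯 \ 𝒮`; in particular it is nonnegative. -/
theorem axiom4_nonneg {ι Γ : Type*} [DecidableEq ι] [AddCommGroup Γ] [AddGroup.FG Γ]
    (G : Type*) [AddCommGroup G] (hG : TorsionwiseFinite G)
    (a : ι → Γ) (S T : Finset ι) (hST : S ⊆ T)
    (hr : rk Γ (a '' (S : Set ι)) = rk Γ (a '' (T : Set ι))) :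
    (∑ B ∈ T.powerset.filter (fun B => S ⊆ B),
        (-1 : ℤ) ^ (B.card - S.card) * (mult Γ G (a '' (B : Set ι)) : ℤ)) =
      (Nat.card {φ : ((sat (AddSubgroup.closure (a '' (S : Set ι)))) ⧸
          ((AddSubgroup.closure (a '' (S : Set ι))).addSubgroupOf
            (sat (AddSubgroup.closure (a '' (S : Set ι)))))) →+ G //
        ∀ i ∈ T \ S, ∀ g : sat (AddSubgroup.closure (a '' (S : Set ι))),
          (g : Γ) = a i → φ (QuotientAddGroup.mk g) ≠ 0} : ℤ) ∧
    0 ≤ ∑ B ∈ T.powerset.filter (fun B => S ⊆ B),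
        (-1 : ℤ) ^ (B.card - S.card) * (mult Γ G (a '' (B : Set ι)) : ℤ) := by 
  classical
  haveI : Module.Finite ℤ Γ := Module.Finite.iff_addGroup_fg.mpr ‹_›
  set K : AddSubgroup Γ := AddSubgroup.closure (a '' (S : Set ι)) with hK
  set Γ' : AddSubgroup Γ := sat K with hΓ'
  have hTmem : ∀ i ∈ T, a i ∈ Γ' := by
    intro i hi
    exact mem_sat_of_finrank_eq (N := K) (M := AddSubgroup.closure (a '' (T : Set ι)))
      (AddSubgroup.closure_mono (Set.image_mono (f := a) (by exact_mod_cast hST))) hr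
      (AddSubgroup.subset_closure ⟨i, hi, rfl⟩)
  set Q := Γ' ⧸ K.addSubgroupOf Γ' with hQ
  haveI : AddGroup.FG Γ' := by
    rw [AddGroup.fg_iff_addSubgroup_fg]
    have := IsNoetherian.noetherian (AddSubgroup.toIntSubmodule Γ')
    rwa [Submodule.fg_iff_addSubgroup_fg, AddSubgroup.toIntSubmodule_toAddSubgroup] at this
  haveI : AddGroup.FG Q :=
    AddGroup.fg_of_surjective (f := QuotientAddGroup.mk' (K.addSubgroupOf Γ'))
      (QuotientAddGroup.mk'_surjective _)
  haveI : Finite Q := AddCommGroup.finite_of_fg_torsion Q (fun q =>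
    QuotientAddGroup.induction_on q (fun g => by
      obtain ⟨n, hn, hng⟩ := mem_sat.mp g.2
      refine isOfFinAddOrder_iff_nsmul_eq_zero.mpr ⟨n, hn, ?_⟩
      rw [← QuotientAddGroup.mk_nsmul, QuotientAddGroup.eq_zero_iff]
      exact AddSubgroup.mem_addSubgroupOf.mpr (by simpa using hng)))
  haveI : Finite (Q →+ G) := finite_addMonoidHom_of_torsionwiseFinite hG
  haveI : Fintype (Q →+ G) := Fintype.ofFinite _
  set P : ι → (Q →+ G) → Prop :=
    fun i φ => ∀ g : Γ', (g : Γ) = a i → φ (QuotientAddGroup.mk g) = 0 with hP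
  have hcount : ∀ B : Finset ι, S ⊆ B → B ⊆ T →
      mult Γ G (a '' (B : Set ι)) =
        (Finset.univ.filter (fun φ : Q →+ G => ∀ i ∈ B \ S, P i φ)).card := by
    intro B hSB hBT
    set KB : AddSubgroup Γ := AddSubgroup.closure (a '' (B : Set ι)) with hKB
    have hKKB : K ≤ KB := AddSubgroup.closure_mono (Set.image_mono (f := a) (by exact_mod_cast hSB))
    have hKBΓ' : KB ≤ Γ' := (AddSubgroup.closure_le _).mpr (by
      rintro _ ⟨i, hi, rfl⟩
      exact hTmem i (hBT hi))
    have hsat : sat KB = Γ' := sat_eq_of_le_of_le_sat hKKB hKBΓ'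
    have key : ∀ ψ : Γ' →+ G,
        ((∀ x ∈ K.addSubgroupOf Γ', ψ x = 0) ∧
          (∀ i ∈ B \ S, ∀ g : Γ', (g : Γ) = a i → ψ g = 0)) ↔
        (∀ x ∈ KB.addSubgroupOf Γ', ψ x = 0) := by
      intro ψ
      constructor
      · rintro ⟨h1, h2⟩ x hx
        have hle : KB ≤ AddSubgroup.map Γ'.subtype ψ.ker := by
          refine (AddSubgroup.closure_le _).mpr ?_
          rintro _ ⟨i, hi, rfl⟩
          have hmem : a i ∈ Γ' := hTmem i (hBT hi)
          by_cases hiS : i ∈ S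
          · refine AddSubgroup.mem_map.mpr ⟨⟨a i, hmem⟩, ?_, rfl⟩
            exact AddMonoidHom.mem_ker.mpr (h1 _ (AddSubgroup.mem_addSubgroupOf.mpr
              (AddSubgroup.subset_closure ⟨i, hiS, rfl⟩)))
          · refine AddSubgroup.mem_map.mpr ⟨⟨a i, hmem⟩, ?_, rfl⟩
            exact AddMonoidHom.mem_ker.mpr
              (h2 i (Finset.mem_sdiff.mpr ⟨hi, hiS⟩) ⟨a i, hmem⟩ rfl)
        obtain ⟨y, hy, hyx⟩ := AddSubgroup.mem_map.mp (hle (AddSubgroup.mem_addSubgroupOf.mp hx))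
        have hyx' : y = x := Subtype.ext hyx
        rw [← hyx']
        exact AddMonoidHom.mem_ker.mp hy
      · intro h
        refine ⟨fun x hx => h x ?_, fun i hi g hg => h g ?_⟩
        · exact AddSubgroup.mem_addSubgroupOf.mpr (hKKB (AddSubgroup.mem_addSubgroupOf.mp hx))
        · refine AddSubgroup.mem_addSubgroupOf.mpr ?_
          rw [hg]
          exact AddSubgroup.subset_closure ⟨i, (Finset.mem_sdiff.mp hi).1, rfl⟩
    have e1 : mult Γ G (a '' (B : Set ι)) =
        Nat.card (((sat KB) ⧸ KB.addSubgroupOf (sat KB)) →+ G) :=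
      Nat.card_congr
        ((AddEquiv.addMonoidHomCongrLeftEquiv (torsionQuotEquiv Γ KB)).symm)
    rw [hsat] at e1
    have e2 : Nat.card ((Γ' ⧸ KB.addSubgroupOf Γ') →+ G) =
        Nat.card {φ : Q →+ G // ∀ i ∈ B \ S, P i φ} := by
      refine Nat.card_congr (Equiv.symm ?_)
      calc {φ : Q →+ G // ∀ i ∈ B \ S, P i φ}
          ≃ {ψ : {ψ : Γ' →+ G // ∀ x ∈ K.addSubgroupOf Γ', ψ x = 0} //
              ∀ i ∈ B \ S, ∀ g : Γ', (g : Γ) = a i → ψ.1 g = 0} :=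
            (quotHomEquiv (K.addSubgroupOf Γ')).subtypeEquiv (fun φ => Iff.rfl)
        _ ≃ {ψ : Γ' →+ G // (∀ x ∈ K.addSubgroupOf Γ', ψ x = 0) ∧
              (∀ i ∈ B \ S, ∀ g : Γ', (g : Γ) = a i → ψ g = 0)} :=
            Equiv.subtypeSubtypeEquivSubtypeInter
              (fun ψ : Γ' →+ G => ∀ x ∈ K.addSubgroupOf Γ', ψ x = 0)
              (fun ψ : Γ' →+ G => ∀ i ∈ B \ S, ∀ g : Γ', (g : Γ) = a i → ψ g = 0)
        _ ≃ {ψ : Γ' →+ G // ∀ x ∈ KB.addSubgroupOf Γ', ψ x = 0} :=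
            Equiv.subtypeEquivRight key
        _ ≃ ((Γ' ⧸ KB.addSubgroupOf Γ') →+ G) := (quotHomEquiv _).symm
    rw [e1, e2, Nat.card_eq_fintype_card, Fintype.card_subtype]
  have main : (∑ B ∈ T.powerset.filter (fun B => S ⊆ B),
      (-1 : ℤ) ^ (B.card - S.card) * (mult Γ G (a '' (B : Set ι)) : ℤ)) =
      (Nat.card {φ : Q →+ G //
        ∀ i ∈ T \ S, ∀ g : Γ', (g : Γ) = a i → φ (QuotientAddGroup.mk g) ≠ 0} : ℤ) := by
    have hsum : (∑ B ∈ T.powerset.filter (fun B => S ⊆ B),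
        (-1 : ℤ) ^ (B.card - S.card) * (mult Γ G (a '' (B : Set ι)) : ℤ))
        = ∑ C ∈ (T \ S).powerset, (-1 : ℤ) ^ C.card *
          ((Finset.univ.filter (fun φ : Q →+ G => ∀ i ∈ C, P i φ)).card : ℤ) := by
      refine Finset.sum_nbij' (fun B => B \ S) (fun C => C ∪ S) ?_ ?_ ?_ ?_ ?_
      · intro B hB
        rw [Finset.mem_filter, Finset.mem_powerset] at hB
        exact Finset.mem_powerset.mpr (Finset.sdiff_subset_sdiff hB.1 le_rfl)
      · intro C hC
        rw [Finset.mem_powerset] at hC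
        refine Finset.mem_filter.mpr ⟨Finset.mem_powerset.mpr ?_, Finset.subset_union_right⟩
        exact Finset.union_subset (hC.trans (Finset.sdiff_subset)) hST
      · intro B hB
        rw [Finset.mem_filter, Finset.mem_powerset] at hB
        exact Finset.sdiff_union_of_subset hB.2
      · intro C hC
        rw [Finset.mem_powerset] at hC
        exact Finset.union_sdiff_cancel_right
          (Finset.disjoint_of_subset_left hC Finset.sdiff_disjoint)
      · intro B hB
        rw [Finset.mem_filter, Finset.mem_powerset] at hB
        rw [Finset.card_sdiff_of_subset hB.2, hcount B hB.2 hB.1]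
    rw [hsum, inclExcl (T \ S) P]
    congr 1
    have hiff : ∀ φ : Q →+ G,
        (∀ i ∈ T \ S, ∀ g : Γ', (g : Γ) = a i → φ (QuotientAddGroup.mk g) ≠ 0) ↔
        (∀ i ∈ T \ S, ¬ P i φ) := by
      intro φ
      refine forall₂_congr (fun i hi => ?_)
      have hmem : a i ∈ Γ' := hTmem i (Finset.mem_sdiff.mp hi).1
      constructor
      · intro h hP'
        exact h ⟨a i, hmem⟩ rfl (hP' ⟨a i, hmem⟩ rfl)
      · intro h g hg h0
        refine h (fun g' hg' => ?_)
        rwa [show g' = g from Subtype.ext (by rw [hg, hg'])]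
    rw [Nat.card_eq_fintype_card, Fintype.card_subtype]
    exact (congrArg Finset.card (Finset.filter_congr (fun φ _ => hiff φ))).symm
  exact ⟨main, main ▸ Int.natCast_nonneg _⟩
end

section
/- Let 𝒜 be a finite list in a finitely generated abelian group Γ, and let G₁, G₂ be torsion-wise finite abelian groups. Then the convolution formula holds: T_𝒜^{G₁×G₂}(x, y) = Σ_{ℬ⊂𝒜} T_ℬ^{G₁}(0, y) · T_{𝒜/ℬ}^{G₂}(x, 0), where the sum is over all sublists ℬ of 𝒜 and 𝒜/ℬ denotes the contraction of 𝒜 by ℬ inside Γ/⟨ℬ⟩. -/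
noncomputable def Tpoly {ι Γ : Type*} [AddCommGroup Γ] (G : Type*) [AddCommGroup G]
    (A : Finset ι) (a : ι → Γ) (x y : ℤ) : ℤ :=
  ∑ S ∈ A.powerset, (mult Γ G (a '' (S : Set ι)) : ℤ) *
    (x - 1) ^ (rk Γ (a '' (A : Set ι)) - rk Γ (a '' (S : Set ι))) *
    (y - 1) ^ (S.card - rk Γ (a '' (S : Set ι)))

open AddSubgroup Module Finset

section Aux

/-- Homs into a product. -/
def homProdEquiv (T G₁ G₂ : Type*) [AddCommGroup T] [AddCommGroup G₁] [AddCommGroup G₂] :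
    (T →+ G₁ × G₂) ≃ (T →+ G₁) × (T →+ G₂) where
  toFun f := ((AddMonoidHom.fst G₁ G₂).comp f, (AddMonoidHom.snd G₁ G₂).comp f)
  invFun p := p.1.prod p.2
  left_inv _ := rfl
  right_inv _ := rfl

lemma aux_mult_prod {Γ : Type*} [AddCommGroup Γ] (G₁ G₂ : Type*) [AddCommGroup G₁]
    [AddCommGroup G₂] (X : Set Γ) :
    mult Γ (G₁ × G₂) X = mult Γ G₁ X * mult Γ G₂ X := by
  unfold mult
  rw [← Nat.card_prod]
  exact Nat.card_congr (homProdEquiv _ G₁ G₂)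

lemma torsion_map {G G' : Type*} [AddCommGroup G] [AddCommGroup G'] (e : G ≃+ G') :
    (AddCommGroup.torsion G).map e.toAddMonoidHom = AddCommGroup.torsion G' := by
  ext x
  simp only [AddSubgroup.mem_map]
  constructor
  · rintro ⟨y, hy, rfl⟩
    exact e.toAddMonoidHom.isOfFinAddOrder hy
  · intro hx
    exact ⟨e.symm x, e.symm.toAddMonoidHom.isOfFinAddOrder hx, by simp⟩

noncomputable def torsionEquiv {G G' : Type*} [AddCommGroup G] [AddCommGroup G'] (e : G ≃+ G') :
    AddCommGroup.torsion G ≃+ AddCommGroup.torsion G' :=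
  (AddEquiv.addSubgroupMap e (AddCommGroup.torsion G)).trans
    (AddEquiv.addSubgroupCongr (torsion_map e))

def homCongrLeft {T T' G : Type*} [AddCommGroup T] [AddCommGroup T'] [AddCommGroup G]
    (e : T ≃+ T') : (T →+ G) ≃ (T' →+ G) where
  toFun f := f.comp e.symm.toAddMonoidHom
  invFun g := g.comp e.toAddMonoidHom
  left_inv f := by ext t; simp
  right_inv g := by ext t; simp

lemma aux_closure_image {Γ : Type*} [AddCommGroup Γ] (X Y : Set Γ) :
    closure ((QuotientAddGroup.mk' (closure X)) '' Y)
      = AddSubgroup.map (QuotientAddGroup.mk' (closure X)) (closure (X ∪ Y)) := by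
  rw [AddMonoidHom.map_closure, Set.image_union, AddSubgroup.closure_union]
  have h0 : (QuotientAddGroup.mk' (closure X)) '' X ⊆ {(0 : Γ ⧸ closure X)} := by
    rintro - ⟨x, hx, rfl⟩
    simp only [Set.mem_singleton_iff, QuotientAddGroup.mk'_apply]
    rw [QuotientAddGroup.eq_zero_iff]
    exact AddSubgroup.subset_closure hx
  have : closure ((QuotientAddGroup.mk' (closure X)) '' X) = ⊥ := by
    rw [eq_bot_iff]
    exact (AddSubgroup.closure_le _).2 (fun x hx => by simpa using h0 hx)
  rw [this, bot_sup_eq]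

noncomputable def aux_quot_equiv {Γ : Type*} [AddCommGroup Γ] (X Y : Set Γ) :
    (Γ ⧸ closure X) ⧸ closure ((QuotientAddGroup.mk' (closure X)) '' Y)
      ≃+ Γ ⧸ closure (X ∪ Y) :=
  (QuotientAddGroup.quotientAddEquivOfEq (aux_closure_image X Y)).trans
    (QuotientAddGroup.quotientQuotientEquivQuotient (closure X) (closure (X ∪ Y))
      (AddSubgroup.closure_mono Set.subset_union_left))

lemma aux_mult_quot {Γ : Type*} [AddCommGroup Γ] (G : Type*) [AddCommGroup G] (X Y : Set Γ) :
    mult (Γ ⧸ closure X) G ((QuotientAddGroup.mk' (closure X)) '' Y) = mult Γ G (X ∪ Y) :=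
  Nat.card_congr (homCongrLeft (torsionEquiv (aux_quot_equiv X Y)))

universe u

lemma aux_finrank_map_add {Γ Γ' : Type u} [AddCommGroup Γ] [AddCommGroup Γ'] [Module.Finite ℤ Γ]
    (f : Γ →+ Γ') (H : AddSubgroup Γ) (hK : f.ker ≤ H) :
    finrank ℤ (H.map f) + finrank ℤ f.ker = finrank ℤ H := by
  set Hm := toIntSubmodule H with hHm
  let φ : Hm →ₗ[ℤ] Γ' := f.toIntLinearMap.comp Hm.subtype
  have h1 := LinearMap.rank_range_add_rank_ker φ
  have hrange : LinearMap.range φ = toIntSubmodule (H.map f) := by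
    rw [LinearMap.range_comp, Submodule.range_subtype]
    exact AddMonoidHom.coe_toIntLinearMap_map f H
  have hker : LinearMap.ker φ = Submodule.comap Hm.subtype (toIntSubmodule f.ker) := by
    rw [LinearMap.ker_comp, AddMonoidHom.coe_toIntLinearMap_ker]
  have hKle : toIntSubmodule f.ker ≤ Hm := hK
  have e2 : (LinearMap.ker φ) ≃ₗ[ℤ] toIntSubmodule f.ker := by
    rw [hker]; exact Submodule.comapSubtypeEquivOfLe hKle
  rw [hrange, e2.rank_eq] at h1
  have hfin : Module.rank ℤ Hm < Cardinal.aleph0 :=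
    lt_of_le_of_lt (Submodule.rank_le Hm) (Module.rank_lt_aleph0 ℤ Γ)
  have h2 : Module.rank ℤ (toIntSubmodule (H.map f)) < Cardinal.aleph0 := by
    refine lt_of_le_of_lt ?_ hfin
    rw [← h1]; exact le_self_add
  have h3 : Module.rank ℤ (toIntSubmodule f.ker) < Cardinal.aleph0 := by
    refine lt_of_le_of_lt ?_ hfin
    rw [← h1]; exact le_add_self
  have := congrArg Cardinal.toNat h1
  rwa [Cardinal.toNat_add h2 h3] at this

lemma aux_rk_quot {Γ : Type*} [AddCommGroup Γ] [Module.Finite ℤ Γ] (X Y : Set Γ) :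
    rk (Γ ⧸ closure X) ((QuotientAddGroup.mk' (closure X)) '' Y) + rk Γ X = rk Γ (X ∪ Y) := by
  unfold rk
  rw [congrArg (fun (H : AddSubgroup (Γ ⧸ closure X)) => finrank ℤ H) (aux_closure_image X Y)]
  have := aux_finrank_map_add (QuotientAddGroup.mk' (closure X)) (closure (X ∪ Y))
    (by rw [QuotientAddGroup.ker_mk']; exact AddSubgroup.closure_mono Set.subset_union_left)
  rwa [QuotientAddGroup.ker_mk'] at this

lemma aux_rk_mono {Γ : Type*} [AddCommGroup Γ] [Module.Finite ℤ Γ] {X Y : Set Γ} (h : X ⊆ Y) :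
    rk Γ X ≤ rk Γ Y := by
  unfold rk
  have : toIntSubmodule (closure X) ≤ toIntSubmodule (closure Y) := by
    exact_mod_cast AddSubgroup.closure_mono h
  exact Submodule.finrank_mono this

lemma aux_rk_le_card {Γ ι : Type*} [AddCommGroup Γ] (a : ι → Γ) (S : Finset ι) :
    rk Γ (a '' (S : Set ι)) ≤ S.card := by
  unfold rk
  have h1 : Module.rank ℤ (closure (a '' (S : Set ι)))
      ≤ Cardinal.mk (a '' (S : Set ι)) := by
    have heq : toIntSubmodule (closure (a '' (S : Set ι)))
        = Submodule.span ℤ (a '' (S : Set ι)) := by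
      rw [← Submodule.span_int_eq_addSubgroupClosure]; rfl
    have h2 := rank_span_le (R := ℤ) (a '' (S : Set ι))
    rw [← heq] at h2
    exact h2
  have h3 : Cardinal.mk (a '' (S : Set ι)) ≤ (S.card : Cardinal) := by
    classical
    have h4 : (a '' (S : Set ι)) = ((S.image a : Finset Γ) : Set Γ) := (Finset.coe_image).symm
    rw [h4, Finset.coe_sort_coe, Cardinal.mk_coe_finset]
    exact_mod_cast Finset.card_image_le
  calc Module.finrank ℤ (closure (a '' (S : Set ι)))
      = Cardinal.toNat (Module.rank ℤ (closure (a '' (S : Set ι)))) := rfl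
    _ ≤ Cardinal.toNat (S.card : Cardinal) :=
        Cardinal.toNat_le_toNat (h1.trans h3) (by simp [Cardinal.nat_lt_aleph0])
    _ = S.card := by simp

section Finsets

variable {ι Γ : Type*} [DecidableEq ι] [AddCommGroup Γ] (a : ι → Γ)

lemma aux_coe_union (B T : Finset ι) :
    (a '' ((B ∪ T : Finset ι) : Set ι)) = (a '' (B : Set ι)) ∪ (a '' (T : Set ι)) := by
  rw [Finset.coe_union, Set.image_union]

lemma aux_image_comp (B T : Finset ι) :
    ((fun i => QuotientAddGroup.mk' (closure (a '' (B : Set ι))) (a i)) '' (T : Set ι))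
      = (QuotientAddGroup.mk' (closure (a '' (B : Set ι)))) '' (a '' (T : Set ι)) :=
  (Set.image_image _ a _).symm

variable [Module.Finite ℤ Γ]

lemma aux_rk_quot' (B T : Finset ι) :
    rk (Γ ⧸ closure (a '' (B : Set ι)))
        ((fun i => QuotientAddGroup.mk' (closure (a '' (B : Set ι))) (a i)) '' (T : Set ι))
      + rk Γ (a '' (B : Set ι)) = rk Γ (a '' ((B ∪ T : Finset ι) : Set ι)) := by
  rw [aux_image_comp, aux_coe_union]
  exact aux_rk_quot _ _

lemma aux_mult_quot' (G : Type*) [AddCommGroup G] (B T : Finset ι) :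
    mult (Γ ⧸ closure (a '' (B : Set ι))) G
        ((fun i => QuotientAddGroup.mk' (closure (a '' (B : Set ι))) (a i)) '' (T : Set ι))
      = mult Γ G (a '' ((B ∪ T : Finset ι) : Set ι)) := by
  rw [aux_image_comp, aux_coe_union]
  exact aux_mult_quot _ _ _

lemma aux_rk_union_le (B T : Finset ι) :
    rk Γ (a '' ((B ∪ T : Finset ι) : Set ι)) ≤ rk Γ (a '' (B : Set ι)) + T.card := by
  rw [← aux_rk_quot' a B T, add_comm]
  exact Nat.add_le_add_left (aux_rk_le_card _ T) _

lemma aux_rk_subset {B U : Finset ι} (h : B ⊆ U) :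
    rk Γ (a '' (B : Set ι)) ≤ rk Γ (a '' (U : Set ι)) :=
  aux_rk_mono (Set.image_mono (f := a) (Finset.coe_subset.mpr h))

end Finsets

/-- The sign sum over `B` with `S ⊆ B ⊆ U`. -/
lemma aux_sign_sum {ι : Type*} [DecidableEq ι] (A S U : Finset ι) (hSU : S ⊆ U) (hUA : U ⊆ A) :
    ∑ B ∈ A.powerset.filter (fun B => S ⊆ B ∧ B ⊆ U), ((-1 : ℤ)) ^ ((U \ B).card)
      = if U = S then 1 else 0 := by
  have : ∑ B ∈ A.powerset.filter (fun B => S ⊆ B ∧ B ⊆ U), ((-1 : ℤ)) ^ ((U \ B).card)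
      = ∑ D ∈ (U \ S).powerset, ((-1 : ℤ)) ^ D.card := by
    refine Finset.sum_nbij' (fun B => U \ B) (fun D => U \ D) ?_ ?_ ?_ ?_ ?_
    · intro B hB
      simp only [Finset.mem_filter, Finset.mem_powerset] at hB ⊢
      exact Finset.sdiff_subset_sdiff le_rfl hB.2.1
    · intro D hD
      simp only [Finset.mem_powerset] at hD
      simp only [Finset.mem_filter, Finset.mem_powerset]
      refine ⟨Finset.Subset.trans (Finset.sdiff_subset) hUA, ?_, Finset.sdiff_subset⟩
      rw [Finset.subset_sdiff]
      exact ⟨hSU, Finset.disjoint_left.mpr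
        (fun x hxS hxD => ((Finset.mem_sdiff.mp (hD hxD)).2 hxS))⟩
    · intro B hB
      simp only [Finset.mem_filter, Finset.mem_powerset] at hB
      exact Finset.sdiff_sdiff_eq_self hB.2.2
    · intro D hD
      simp only [Finset.mem_powerset] at hD
      exact Finset.sdiff_sdiff_eq_self (hD.trans Finset.sdiff_subset)
    · intro B _
      rfl
  rw [this, Finset.sum_powerset_neg_one_pow_card]
  refine if_congr ?_ rfl rfl
  rw [Finset.sdiff_eq_empty_iff_subset]
  exact ⟨fun h => Finset.Subset.antisymm h hSU, fun h => h ▸ le_rfl⟩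

end Aux

/-- The convolution formula:
`T_𝒜^{G₁×G₂}(x,y) = Σ_{ℬ⊆𝒜} T_ℬ^{G₁}(0,y) · T_{𝒜/ℬ}^{G₂}(x,0)`, where `𝒜/ℬ` is the
contraction of `𝒜` by `ℬ` inside `Γ/⟨ℬ⟩`. -/
theorem tutte_convolution {ι Γ : Type*} [DecidableEq ι] [AddCommGroup Γ] [AddGroup.FG Γ]
    (G₁ G₂ : Type*) [AddCommGroup G₁] [AddCommGroup G₂]
    (hG₁ : TorsionwiseFinite G₁) (hG₂ : TorsionwiseFinite G₂)
    (A : Finset ι) (a : ι → Γ) :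
    ∀ x y : ℤ, Tpoly (G₁ × G₂) A a x y =
      ∑ B ∈ A.powerset, Tpoly G₁ B a 0 y *
        Tpoly G₂ (A \ B)
          (fun i => QuotientAddGroup.mk' (AddSubgroup.closure (a '' (B : Set ι))) (a i))
          x 0 := by
  intro x y
  classical
  haveI : Module.Finite ℤ Γ := Module.Finite.iff_addGroup_fg.mpr ‹_›
  -- notation
  set r : Finset ι → ℕ := fun S => rk Γ (a '' (S : Set ι)) with hr
  set m₁ : Finset ι → ℕ := fun S => mult Γ G₁ (a '' (S : Set ι)) with hm₁
  set m₂ : Finset ι → ℕ := fun S => mult Γ G₂ (a '' (S : Set ι)) with hm₂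
  -- Step 1: expand the G₁ factor
  have hT1 : ∀ B : Finset ι, Tpoly G₁ B a 0 y
      = ∑ S ∈ B.powerset, (m₁ S : ℤ) * (-1 : ℤ) ^ (r B - r S) * (y - 1) ^ (S.card - r S) := by
    intro B
    unfold Tpoly
    refine Finset.sum_congr rfl (fun S hS => ?_)
    simp only [hm₁, hr]
    norm_num
  -- Step 2: expand the G₂ factor
  have hT2 : ∀ B ∈ A.powerset,
      Tpoly G₂ (A \ B)
          (fun i => QuotientAddGroup.mk' (AddSubgroup.closure (a '' (B : Set ι))) (a i)) x 0
      = ∑ T ∈ (A \ B).powerset, (m₂ (B ∪ T) : ℤ) * (x - 1) ^ (r A - r (B ∪ T)) *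
          (-1 : ℤ) ^ (T.card - (r (B ∪ T) - r B)) := by
    intro B hB
    rw [Finset.mem_powerset] at hB
    unfold Tpoly
    refine Finset.sum_congr rfl (fun T hT => ?_)
    rw [Finset.mem_powerset] at hT
    have hTA : B ∪ T ⊆ A := Finset.union_subset hB (hT.trans (Finset.sdiff_subset))
    have h1 := aux_rk_quot' a B T
    have h2 := aux_rk_quot' a B (A \ B)
    rw [Finset.union_sdiff_of_subset hB] at h2
    have h3 := aux_mult_quot' a G₂ B T
    have h4 : rk Γ (a '' ((B : Finset ι) : Set ι)) ≤ rk Γ (a '' ((B ∪ T : Finset ι) : Set ι)) :=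
      aux_rk_subset a Finset.subset_union_left
    have h5 : rk Γ (a '' ((B ∪ T : Finset ι) : Set ι)) ≤ rk Γ (a '' (A : Set ι)) :=
      aux_rk_subset a hTA
    simp only [hm₂, hr]
    have e1 : rk (Γ ⧸ closure (a '' (B : Set ι)))
        ((fun i => QuotientAddGroup.mk' (closure (a '' (B : Set ι))) (a i)) '' (T : Set ι))
        = rk Γ (a '' ((B ∪ T : Finset ι) : Set ι)) - rk Γ (a '' (B : Set ι)) := by omega
    have e2 : rk (Γ ⧸ closure (a '' (B : Set ι)))
        ((fun i => QuotientAddGroup.mk' (closure (a '' (B : Set ι))) (a i)) '' ((A \ B : Finset ι) : Set ι))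
        = rk Γ (a '' (A : Set ι)) - rk Γ (a '' (B : Set ι)) := by omega
    rw [h3, e1, e2]
    have e3 : rk Γ (a '' (A : Set ι)) - rk Γ (a '' (B : Set ι))
        - (rk Γ (a '' ((B ∪ T : Finset ι) : Set ι)) - rk Γ (a '' (B : Set ι)))
        = rk Γ (a '' (A : Set ι)) - rk Γ (a '' ((B ∪ T : Finset ι) : Set ι)) := by omega
    rw [e3]
    norm_num
  -- abbreviations for the summand
  set c : Finset ι → Finset ι → ℤ := fun S U =>
    (m₁ S : ℤ) * (y - 1) ^ (S.card - r S) * ((m₂ U : ℤ) * (x - 1) ^ (r A - r U)) with hc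
  -- Step 3: rewrite RHS as triple sum
  have step3 : ∑ B ∈ A.powerset, Tpoly G₁ B a 0 y *
        Tpoly G₂ (A \ B)
          (fun i => QuotientAddGroup.mk' (AddSubgroup.closure (a '' (B : Set ι))) (a i)) x 0
      = ∑ B ∈ A.powerset, ∑ S ∈ B.powerset,
          ∑ U ∈ A.powerset.filter (fun U => B ⊆ U),
            c S U * ((-1 : ℤ) ^ (r B - r S) * (-1 : ℤ) ^ ((U \ B).card - (r U - r B))) := by
    refine Finset.sum_congr rfl (fun B hB => ?_)
    have hBA : B ⊆ A := Finset.mem_powerset.mp hB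
    rw [hT1 B, hT2 B hB, Finset.sum_mul_sum]
    refine Finset.sum_congr rfl (fun S hS => ?_)
    refine Finset.sum_nbij' (fun T => B ∪ T) (fun U => U \ B) ?_ ?_ ?_ ?_ ?_
    · intro T hT
      rw [Finset.mem_powerset] at hT
      simp only [Finset.mem_filter, Finset.mem_powerset]
      exact ⟨Finset.union_subset hBA (hT.trans Finset.sdiff_subset), Finset.subset_union_left⟩
    · intro U hU
      simp only [Finset.mem_filter, Finset.mem_powerset] at hU
      rw [Finset.mem_powerset]
      exact Finset.sdiff_subset_sdiff hU.1 le_rfl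
    · intro T hT
      rw [Finset.mem_powerset] at hT
      refine Finset.union_sdiff_cancel_left ?_
      exact Finset.disjoint_left.mpr
        (fun i hiB hiT => (Finset.mem_sdiff.mp (hT hiT)).2 hiB)
    · intro U hU
      simp only [Finset.mem_filter, Finset.mem_powerset] at hU
      exact Finset.union_sdiff_of_subset hU.2
    · intro T hT
      rw [Finset.mem_powerset] at hT
      have hdisj : Disjoint B T := Finset.disjoint_left.mpr
        (fun i hiB hiT => (Finset.mem_sdiff.mp (hT hiT)).2 hiB)
      rw [Finset.union_sdiff_cancel_left hdisj]
      ring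
  -- Step 4: swap the sums
  have step4 : ∑ B ∈ A.powerset, ∑ S ∈ B.powerset,
          ∑ U ∈ A.powerset.filter (fun U => B ⊆ U),
            c S U * ((-1 : ℤ) ^ (r B - r S) * (-1 : ℤ) ^ ((U \ B).card - (r U - r B)))
      = ∑ S ∈ A.powerset, ∑ U ∈ A.powerset.filter (fun U => S ⊆ U),
          ∑ B ∈ A.powerset.filter (fun B => S ⊆ B ∧ B ⊆ U),
            c S U * ((-1 : ℤ) ^ (r B - r S) * (-1 : ℤ) ^ ((U \ B).card - (r U - r B))) := by
    rw [Finset.sum_comm' (s' := fun S => A.powerset.filter (fun B => S ⊆ B)) (t' := A.powerset)]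
    · refine Finset.sum_congr rfl (fun S hS => ?_)
      rw [Finset.sum_comm' (s' := fun U => A.powerset.filter (fun B => S ⊆ B ∧ B ⊆ U))
        (t' := A.powerset.filter (fun U => S ⊆ U))]
      intro B U
      simp only [Finset.mem_filter, Finset.mem_powerset]
      constructor
      · rintro ⟨⟨hBA, hSB⟩, hUA, hBU⟩
        exact ⟨⟨hBA, hSB, hBU⟩, hUA, hSB.trans hBU⟩
      · rintro ⟨⟨hBA, hSB, hBU⟩, hUA, _⟩
        exact ⟨⟨hBA, hSB⟩, hUA, hBU⟩
    · intro B S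
      simp only [Finset.mem_filter, Finset.mem_powerset]
      constructor
      · rintro ⟨hBA, hSB⟩
        exact ⟨⟨hBA, hSB⟩, hSB.trans hBA⟩
      · rintro ⟨⟨hBA, hSB⟩, hSA⟩
        exact ⟨hBA, hSB⟩
  -- Step 5: evaluate the inner sum over B
  have step5 : ∀ S ∈ A.powerset, ∀ U ∈ A.powerset.filter (fun U => S ⊆ U),
      ∑ B ∈ A.powerset.filter (fun B => S ⊆ B ∧ B ⊆ U),
            c S U * ((-1 : ℤ) ^ (r B - r S) * (-1 : ℤ) ^ ((U \ B).card - (r U - r B)))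
      = c S U * ((-1 : ℤ) ^ (r S + r U) * if U = S then 1 else 0) := by
    intro S hS U hU
    simp only [Finset.mem_filter, Finset.mem_powerset] at hU
    obtain ⟨hUA, hSU⟩ := hU
    rw [← Finset.mul_sum]
    congr 1
    rw [← aux_sign_sum A S U hSU hUA, Finset.mul_sum]
    refine Finset.sum_congr rfl (fun B hB => ?_)
    simp only [Finset.mem_filter, Finset.mem_powerset] at hB
    obtain ⟨hBA, hSB, hBU⟩ := hB
    have h4 : r S ≤ r B := aux_rk_subset a hSB
    have h5 : r B ≤ r U := aux_rk_subset a hBU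
    have h6 : r U ≤ r B + (U \ B).card := by
      have := aux_rk_union_le a B (U \ B)
      rwa [Finset.union_sdiff_of_subset hBU] at this
    rw [← pow_add, ← pow_add, neg_one_pow_eq_pow_mod_two,
      neg_one_pow_eq_pow_mod_two (n := r S + r U + (U \ B).card)]
    congr 1
    omega
  -- Step 6: collapse the U sum
  have step6 : ∀ S ∈ A.powerset,
      ∑ U ∈ A.powerset.filter (fun U => S ⊆ U),
        c S U * ((-1 : ℤ) ^ (r S + r U) * if U = S then 1 else 0)
      = c S S := by
    intro S hS
    rw [Finset.sum_eq_single_of_mem S]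
    · rw [if_pos rfl, mul_one]
      have : ((-1 : ℤ)) ^ (r S + r S) = 1 := Even.neg_one_pow ⟨r S, rfl⟩
      rw [this, mul_one]
    · simp only [Finset.mem_filter]
      exact ⟨hS, le_rfl⟩
    · intro U _ hne
      rw [if_neg hne, mul_zero, mul_zero]
  -- Put it all together
  rw [step3, step4]
  rw [Finset.sum_congr rfl (fun S hS => Finset.sum_congr rfl (fun U hU => step5 S hS U hU))]
  rw [Finset.sum_congr rfl (fun S hS => step6 S hS)]
  unfold Tpoly
  refine Finset.sum_congr rfl (fun S hS => ?_)
  rw [aux_mult_prod]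
  push_cast
  simp only [hc, hm₁, hm₂, hr]
  ring
end
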